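/- Gallager's source function E_s is convex on [0, ∞): for all ρ₁, ρ₂ ≥ 0 and λ ∈ [0,1], E_s(λρ₁ + (1-λ)ρ₂) ≤ λ E_s(ρ₁) + (1-λ) E_s(ρ₂). -/

import Mathlib

open Finset Real

/-- Hölder-type interpolation: `∑ x^θ y^(1-θ) ≤ (∑x)^θ (∑y)^(1-θ)`. -/
lemma sum_rpow_mul_rpow_le {ι : Type*} (s : Finset ι) (x y : ι → ℝ)
    (hx : ∀ i, 0 ≤ x i) (hy : ∀ i, 0 ≤ y i) {θ : ℝ} (hθ0 : 0 < θ) (hθ1 : θ < 1) :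
    ∑ i ∈ s, x i ^ θ * y i ^ (1 - θ) ≤
      (∑ i ∈ s, x i) ^ θ * (∑ i ∈ s, y i) ^ (1 - θ) := by
  have h1θ : 0 < 1 - θ := by linarith
  have hpq : Real.HolderConjugate (1/θ) (1/(1-θ)) := by
    constructor
    · rw [one_div, one_div, inv_inv, inv_inv]; ring
    · exact div_pos one_pos hθ0
    · exact div_pos one_pos h1θ
  have H := Real.inner_le_Lp_mul_Lq_of_nonneg hpq (s := s)
    (f := fun i => x i ^ θ) (g := fun i => y i ^ (1 - θ))
    (fun i _ => Real.rpow_nonneg (hx i) θ) (fun i _ => Real.rpow_nonneg (hy i) (1 - θ))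
  calc ∑ i ∈ s, x i ^ θ * y i ^ (1 - θ)
      ≤ (∑ i ∈ s, (x i ^ θ) ^ (1/θ)) ^ (1/(1/θ)) *
        (∑ i ∈ s, (y i ^ (1-θ)) ^ (1/(1-θ))) ^ (1/(1/(1-θ))) := H
    _ = (∑ i ∈ s, x i) ^ θ * (∑ i ∈ s, y i) ^ (1 - θ) := by
        rw [one_div_one_div, one_div_one_div]
        congr 2 <;> apply Finset.sum_congr rfl <;> intro i _
        · rw [← Real.rpow_mul (hx i), mul_one_div, div_self hθ0.ne', Real.rpow_one]
        · rw [← Real.rpow_mul (hy i), mul_one_div, div_self h1θ.ne', Real.rpow_one]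

/-- Gallager's source function is convex on `[0, ∞)`. -/
theorem Es_convex {V : Type*} [Fintype V] [Nonempty V] (p : V → ℝ)
    (hpos : ∀ v, 0 < p v) (hsum : ∑ v, p v = 1) :
    ∀ ρ₁ ρ₂ l : ℝ, 0 ≤ ρ₁ → 0 ≤ ρ₂ → 0 ≤ l → l ≤ 1 →
      (1 + (l * ρ₁ + (1 - l) * ρ₂)) *
          Real.log (∑ v, p v ^ ((1 : ℝ) / (1 + (l * ρ₁ + (1 - l) * ρ₂))))
        ≤ l * ((1 + ρ₁) * Real.log (∑ v, p v ^ ((1 : ℝ) / (1 + ρ₁))))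
          + (1 - l) * ((1 + ρ₂) * Real.log (∑ v, p v ^ ((1 : ℝ) / (1 + ρ₂)))) := by
  intro ρ₁ ρ₂ l hρ₁ hρ₂ hl0 hl1
  -- trivial edge cases
  rcases eq_or_lt_of_le hl0 with h0 | h0
  · simp [← h0]
  rcases eq_or_lt_of_le hl1 with h1 | h1
  · simp [h1]
  set a : ℝ := 1 + ρ₁ with ha
  set b : ℝ := 1 + ρ₂ with hb
  have haP : 0 < a := by positivity
  have hbP : 0 < b := by positivity
  have hc : 1 + (l * ρ₁ + (1 - l) * ρ₂) = l * a + (1 - l) * b := by ring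
  set c : ℝ := l * a + (1 - l) * b with hcdef
  have hcP : 0 < c := by
    have : 0 < l * a := mul_pos h0 haP
    have : 0 ≤ (1 - l) * b := mul_nonneg (by linarith) hbP.le
    linarith
  set θ : ℝ := l * a / c with hθ
  have hθ0 : 0 < θ := div_pos (mul_pos h0 haP) hcP
  have hθ1 : θ < 1 := by
    rw [hθ, div_lt_one hcP, hcdef]
    nlinarith [mul_pos (sub_pos.mpr h1) hbP]
  have h1θ : 1 - θ = (1 - l) * b / c := by
    rw [hθ]; field_simp; rw [hcdef]; ring
  -- rewrite the middle exponent
  have hexp : (1:ℝ) / c = θ * (1/a) + (1 - θ) * (1/b) := by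
    rw [hθ, h1θ]; field_simp; ring
  have hsplit : ∀ v, p v ^ ((1:ℝ)/c) = (p v ^ ((1:ℝ)/a)) ^ θ * (p v ^ ((1:ℝ)/b)) ^ (1 - θ) := by
    intro v
    rw [← Real.rpow_mul (hpos v).le, ← Real.rpow_mul (hpos v).le,
      ← Real.rpow_add (hpos v), hexp]
    ring_nf
  have hS1 : 0 < ∑ v, p v ^ ((1:ℝ)/a) :=
    Finset.sum_pos (fun v _ => Real.rpow_pos_of_pos (hpos v) _) Finset.univ_nonempty
  have hS2 : 0 < ∑ v, p v ^ ((1:ℝ)/b) :=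
    Finset.sum_pos (fun v _ => Real.rpow_pos_of_pos (hpos v) _) Finset.univ_nonempty
  have hH : ∑ v, p v ^ ((1:ℝ)/c) ≤
      (∑ v, p v ^ ((1:ℝ)/a)) ^ θ * (∑ v, p v ^ ((1:ℝ)/b)) ^ (1 - θ) := by
    calc ∑ v, p v ^ ((1:ℝ)/c)
        = ∑ v, (p v ^ ((1:ℝ)/a)) ^ θ * (p v ^ ((1:ℝ)/b)) ^ (1 - θ) := by
          exact Finset.sum_congr rfl fun v _ => hsplit v
      _ ≤ _ := sum_rpow_mul_rpow_le _ _ _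
          (fun v => (Real.rpow_pos_of_pos (hpos v) _).le)
          (fun v => (Real.rpow_pos_of_pos (hpos v) _).le) hθ0 hθ1
  have hSc : 0 < ∑ v, p v ^ ((1:ℝ)/c) :=
    Finset.sum_pos (fun v _ => Real.rpow_pos_of_pos (hpos v) _) Finset.univ_nonempty
  have hlog : Real.log (∑ v, p v ^ ((1:ℝ)/c)) ≤
      θ * Real.log (∑ v, p v ^ ((1:ℝ)/a)) + (1 - θ) * Real.log (∑ v, p v ^ ((1:ℝ)/b)) := by
    calc Real.log (∑ v, p v ^ ((1:ℝ)/c))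
        ≤ Real.log ((∑ v, p v ^ ((1:ℝ)/a)) ^ θ * (∑ v, p v ^ ((1:ℝ)/b)) ^ (1 - θ)) :=
          Real.log_le_log hSc hH
      _ = _ := by
          rw [Real.log_mul (by positivity) (by positivity),
            Real.log_rpow hS1, Real.log_rpow hS2]
  have key : c * Real.log (∑ v, p v ^ ((1:ℝ)/c)) ≤
      l * a * Real.log (∑ v, p v ^ ((1:ℝ)/a)) +
      (1 - l) * b * Real.log (∑ v, p v ^ ((1:ℝ)/b)) := by
    have := mul_le_mul_of_nonneg_left hlog hcP.le
    calc c * Real.log (∑ v, p v ^ ((1:ℝ)/c))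
        ≤ c * (θ * Real.log (∑ v, p v ^ ((1:ℝ)/a)) +
            (1 - θ) * Real.log (∑ v, p v ^ ((1:ℝ)/b))) := this
      _ = _ := by
          rw [mul_add, h1θ, hθ]
          field_simp
  rw [hc]
  calc (l * a + (1 - l) * b) * Real.log (∑ v, p v ^ ((1:ℝ)/(l * a + (1 - l) * b)))
      = c * Real.log (∑ v, p v ^ ((1:ℝ)/c)) := by rw [← hcdef]
    _ ≤ _ := key.trans_eq (by ring)
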